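/- Let c be a vertex of degree k in a graph G that is contained in a big k-clique C, and suppose c has exactly one neighbour d outside C, where d is not adjacent to any other vertex of C. Then the graph (G − E(C − c))/cd, obtained from G by deleting all edges between vertices of C − {c} and then contracting the edge cd, is a vertex-minor of G. -/

import Mathlib

open SimpleGraph

/-! ### Basic operations: local complementation, pivoting, vertex-minors -/

/-- Local complementation at a vertex `v`: the adjacency between each pair of
neighbours of `v` is toggled. -/
def localComp {V : Type*} (G : SimpleGraph V) (v : V) : SimpleGraph V where
  Adj a b := (G.Adj a b ∧ ¬(G.Adj v a ∧ G.Adj v b)) ∨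
    (a ≠ b ∧ ¬ G.Adj a b ∧ G.Adj v a ∧ G.Adj v b)
  symm := by
    constructor
    rintro a b (⟨h1, h2⟩ | ⟨h1, h2, h3, h4⟩)
    · exact Or.inl ⟨h1.symm, fun hc => h2 ⟨hc.2, hc.1⟩⟩
    · exact Or.inr ⟨h1.symm, fun hc => h2 hc.symm, h4, h3⟩
  loopless := by
    constructor
    rintro a (⟨h1, _⟩ | ⟨h1, _⟩)
    · exact G.loopless.irrefl a h1
    · exact h1 rfl

/-- Pivoting an edge `uv`: `G ∧ uv = G * u * v * u`. -/
def pivotG {V : Type*} (G : SimpleGraph V) (u v : V) : SimpleGraph V :=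
  localComp (localComp (localComp G u) v) u

/-- Finite simple graphs, concretely represented on `Fin n`. -/
abbrev FinGraph := Σ n : ℕ, SimpleGraph (Fin n)

/-- One step in the construction of a vertex-minor: pass to an isomorphic copy,
perform a local complementation, or delete a vertex. -/
def VMStep (G H : FinGraph) : Prop :=
  Nonempty (G.2 ≃g H.2) ∨
  (∃ v : Fin G.1, Nonempty ((localComp G.2 v) ≃g H.2)) ∨
  (∃ v : Fin G.1, Nonempty ((G.2.induce {u | u ≠ v}) ≃g H.2))

/-- One step in the construction of a pivot-minor: pass to an isomorphic copy,
pivot an edge, or delete a vertex. -/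
def PMStep (G H : FinGraph) : Prop :=
  Nonempty (G.2 ≃g H.2) ∨
  (∃ u v : Fin G.1, G.2.Adj u v ∧ Nonempty ((pivotG G.2 u v) ≃g H.2)) ∨
  (∃ v : Fin G.1, Nonempty ((G.2.induce {u | u ≠ v}) ≃g H.2))

/-- `H` is a vertex-minor of `G` (both given concretely on `Fin _`). -/
def IsVertexMinorFG (H G : FinGraph) : Prop := Relation.ReflTransGen VMStep G H

/-- `H` is a pivot-minor of `G` (both given concretely on `Fin _`). -/
def IsPivotMinorFG (H G : FinGraph) : Prop := Relation.ReflTransGen PMStep G H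

/-- A finite graph represented concretely on `Fin (Nat.card V)`. -/
noncomputable def toFinGraph {V : Type*} [Finite V] (G : SimpleGraph V) : FinGraph :=
  ⟨Nat.card V, G.comap (Finite.equivFin V).symm⟩

/-- `H` is a vertex-minor of `G`. -/
def HasVertexMinor {V W : Type*} [Finite V] [Finite W]
    (G : SimpleGraph V) (H : SimpleGraph W) : Prop :=
  IsVertexMinorFG (toFinGraph H) (toFinGraph G)

/-- `H` is a pivot-minor of `G`. -/
def HasPivotMinor {V W : Type*} [Finite V] [Finite W]
    (G : SimpleGraph V) (H : SimpleGraph W) : Prop :=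
  IsPivotMinorFG (toFinGraph H) (toFinGraph G)

/-- A class of finite graphs closed under isomorphism, local complementation and
vertex deletion. -/
def VertexMinorClosed (𝒢 : Set FinGraph) : Prop :=
  (∀ G ∈ 𝒢, ∀ H : FinGraph, Nonempty (G.2 ≃g H.2) → H ∈ 𝒢) ∧
  (∀ G ∈ 𝒢, ∀ v : Fin G.1, (⟨G.1, localComp G.2 v⟩ : FinGraph) ∈ 𝒢) ∧
  (∀ G ∈ 𝒢, ∀ v : Fin G.1, toFinGraph (G.2.induce {u | u ≠ v}) ∈ 𝒢)

/-- A class of finite graphs closed under isomorphism, pivoting and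
vertex deletion. -/
def PivotMinorClosed (𝒢 : Set FinGraph) : Prop :=
  (∀ G ∈ 𝒢, ∀ H : FinGraph, Nonempty (G.2 ≃g H.2) → H ∈ 𝒢) ∧
  (∀ G ∈ 𝒢, ∀ u v : Fin G.1, G.2.Adj u v → (⟨G.1, pivotG G.2 u v⟩ : FinGraph) ∈ 𝒢) ∧
  (∀ G ∈ 𝒢, ∀ v : Fin G.1, toFinGraph (G.2.induce {u | u ≠ v}) ∈ 𝒢)

/-! ### Chromatic data -/

/-- The chromatic number, as a natural number (graphs here are finite). -/
noncomputable def chi {V : Type*} (G : SimpleGraph V) : ℕ := G.chromaticNumber.toNat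

/-- The ball of radius `ρ` around `v`: all vertices at distance at most `ρ` from `v`. -/
def ballSet {V : Type*} (G : SimpleGraph V) (v : V) (ρ : ℕ) : Set V :=
  {u | ∃ p : G.Walk v u, p.length ≤ ρ}

/-- `χ^{(ρ)}(G)`: the largest chromatic number of a `ρ`-ball of `G`. -/
noncomputable def chiBall {V : Type*} (G : SimpleGraph V) (ρ : ℕ) : ℕ :=
  ⨆ v : V, chi (G.induce (ballSet G v ρ))

/-- The distance from `u` to `v` is at least `n` (in particular, this holds
vacuously for unreachable pairs). -/
def distGE {V : Type*} (G : SimpleGraph V) (u v : V) (n : ℕ) : Prop :=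
  ∀ p : G.Walk u v, n ≤ p.length

/-- A stable (independent) set of vertices. -/
def IsStableSet {V : Type*} (G : SimpleGraph V) (A : Set V) : Prop :=
  ∀ a ∈ A, ∀ b ∈ A, ¬ G.Adj a b

/-- `A` covers `B`: every vertex of `B` has a neighbour in `A`. -/
def Covers {V : Type*} (G : SimpleGraph V) (A B : Set V) : Prop :=
  ∀ b ∈ B, ∃ a ∈ A, G.Adj a b

/-- `A` and `B` are anti-complete: there are no edges between them. -/
def AntiComplete {V : Type*} (G : SimpleGraph V) (A B : Set V) : Prop :=
  ∀ a ∈ A, ∀ b ∈ B, ¬ G.Adj a b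

/-- An induced path of `G`, given as a walk: it is a path, and the only edges of `G`
between its vertices are the edges of the path. -/
def IsInducedPath {V : Type*} (G : SimpleGraph V) {a b : V} (p : G.Walk a b) : Prop :=
  p.IsPath ∧ ∀ x ∈ p.support, ∀ y ∈ p.support, G.Adj x y → p.toSubgraph.Adj x y
/-! ### Big cliques and bloated trees -/

/-- A big clique: a maximal clique (w.r.t. vertex inclusion) of size at least 3. -/
def IsBigClique {V : Type*} (G : SimpleGraph V) (s : Finset V) : Prop :=
  G.IsClique ↑s ∧ 3 ≤ s.card ∧ ∀ t : Finset V, G.IsClique ↑t → s ⊆ t → t = s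

/-- Two vertices are related when they lie in a common big clique. -/
def bigCliqueRel {V : Type*} (G : SimpleGraph V) (u v : V) : Prop :=
  u = v ∨ ∃ s : Finset V, IsBigClique G s ∧ u ∈ s ∧ v ∈ s

/-- The graph obtained by contracting every big clique to a single vertex. -/
def contractBigCliques {V : Type*} (G : SimpleGraph V) :
    SimpleGraph (Quot (bigCliqueRel G)) where
  Adj a b := a ≠ b ∧ ∃ u v, G.Adj u v ∧ Quot.mk _ u = a ∧ Quot.mk _ v = b
  symm := by
    constructor
    rintro a b ⟨hne, u, v, h, hu, hv⟩
    exact ⟨hne.symm, v, u, h.symm, hv, hu⟩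
  loopless := ⟨fun a h => h.1 rfl⟩

/-- A bloated tree: every edge is in at most one big clique, vertices of a big
`k`-clique have degree at most `k`, and contracting all big cliques yields a tree. -/
def IsBloatedTree {V : Type*} (T : SimpleGraph V) : Prop :=
  (∀ u v, T.Adj u v → ∀ s t : Finset V, IsBigClique T s → IsBigClique T t →
    u ∈ s → v ∈ s → u ∈ t → v ∈ t → s = t) ∧
  (∀ s : Finset V, IsBigClique T s → ∀ v ∈ s, (T.neighborSet v).ncard ≤ s.card) ∧
  (contractBigCliques T).IsTree

/-- A leaf: a vertex of degree at most 1. -/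
def IsLeaf {V : Type*} (G : SimpleGraph V) (v : V) : Prop :=
  (G.neighborSet v).ncard ≤ 1

/-- A branching vertex of a bloated tree: a vertex of degree at least 3 that is
not contained in a triangle. -/
def IsBranching {V : Type*} (G : SimpleGraph V) (v : V) : Prop :=
  3 ≤ (G.neighborSet v).ncard ∧ ¬ ∃ a b, G.Adj v a ∧ G.Adj v b ∧ G.Adj a b

/-! ### Dangling paths and contractions -/

/-- The path `p` dangles from `X`: the set of vertices outside `p` with a
neighbour on `p` is exactly `X`. -/
def DanglesFrom {V : Type*} (G : SimpleGraph V) {a b : V} (p : G.Walk a b)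
    (X : Set V) : Prop :=
  {v | v ∉ p.support ∧ ∃ u ∈ p.support, G.Adj v u} = X

/-- The path `p` dangles oddly from `X`: moreover every vertex of `X` has an odd
number of neighbours on `p`. -/
def DanglesOddly {V : Type*} (G : SimpleGraph V) {a b : V} (p : G.Walk a b)
    (X : Set V) : Prop :=
  DanglesFrom G p X ∧ ∀ x ∈ X, Odd ({u | u ∈ p.support ∧ G.Adj x u}.ncard)

/-- Contract the set `S` to the single vertex `a₀` (for `a₀ ∈ S` with `G[S]`
connected this is contraction of all edges inside `S`). -/
def contractSet {V : Type*} (G : SimpleGraph V) (S : Set V) (a₀ : V) :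
    SimpleGraph {w : V // w ∉ S ∨ w = a₀} where
  Adj u v := u ≠ v ∧
    ((u.1 ∉ S ∧ v.1 ∉ S ∧ G.Adj u.1 v.1) ∨
     (u.1 = a₀ ∧ v.1 ∉ S ∧ ∃ s ∈ S, G.Adj s v.1) ∨
     (v.1 = a₀ ∧ u.1 ∉ S ∧ ∃ s ∈ S, G.Adj u.1 s))
  symm := by
    constructor
    rintro u v ⟨hne, h⟩
    refine ⟨hne.symm, ?_⟩
    rcases h with ⟨h1, h2, h3⟩ | ⟨h1, h2, s, hs, hadj⟩ | ⟨h1, h2, s, hs, hadj⟩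
    · exact Or.inl ⟨h2, h1, h3.symm⟩
    · exact Or.inr (Or.inr ⟨h1, h2, s, hs, hadj.symm⟩)
    · exact Or.inr (Or.inl ⟨h1, h2, s, hs, hadj.symm⟩)
  loopless := ⟨fun u h => h.1 rfl⟩

/-! ### Ramsey numbers -/

/-- Every graph on `Fin N` contains a clique of size `n` or a stable set of size `m`. -/
def RamseyProp (N n m : ℕ) : Prop :=
  ∀ G : SimpleGraph (Fin N),
    (∃ s : Finset (Fin N), G.IsNClique n s) ∨ (∃ s : Finset (Fin N), Gᶜ.IsNClique m s)

/-- The Ramsey number `R(n,m)`: the least `N` such that every graph on at least `N`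
vertices contains a clique of size `n` or a stable set of size `m`. -/
noncomputable def ramsey (n m : ℕ) : ℕ := sInf {N | ∀ M, N ≤ M → RamseyProp M n m}

/-! ### Subdivided complete bipartite graphs and interfered versions -/

/-- The vertex set of (an interfered) `K¹_{n,m}`: the `x_i`, the `y_j`, and the
subdivision vertices `z_{i,j}`. -/
abbrev IVert (n m : ℕ) := Fin n ⊕ Fin m ⊕ Fin n × Fin m

/-- `K¹_{n,m}`: the complete bipartite graph `K_{n,m}` with every edge subdivided
exactly once. -/
def KOneBip (n m : ℕ) : SimpleGraph (IVert n m) :=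
  SimpleGraph.fromRel (fun a b => ∃ i j,
    (a = Sum.inl i ∧ b = Sum.inr (Sum.inr (i, j))) ∨
    (a = Sum.inr (Sum.inl j) ∧ b = Sum.inr (Sum.inr (i, j))))

/-- The pairs that may be adjacent in an interfered `K¹_{n,m}`. -/
def InterferedAllowed (n m : ℕ) (a b : IVert n m) : Prop :=
  (∃ i j, a = Sum.inl i ∧ b = Sum.inr (Sum.inr (i, j))) ∨
  (∃ i j, a = Sum.inr (Sum.inl j) ∧ b = Sum.inr (Sum.inr (i, j))) ∨
  (∃ (k i : Fin n) (j : Fin m), k < i ∧ a = Sum.inl k ∧ b = Sum.inr (Sum.inr (i, j)))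

/-- An interfered `K¹_{n,m}`: all edges `x_i z_{i,j}` and `z_{i,j} y_j` are present,
and all other edges are of the form `x_k z_{i,j}` with `k < i`. -/
def IsInterfered (n m : ℕ) (G : SimpleGraph (IVert n m)) : Prop :=
  (∀ i j, G.Adj (Sum.inl i) (Sum.inr (Sum.inr (i, j)))) ∧
  (∀ i j, G.Adj (Sum.inr (Sum.inl j)) (Sum.inr (Sum.inr (i, j)))) ∧
  (∀ a b, G.Adj a b → InterferedAllowed n m a b ∨ InterferedAllowed n m b a)
/-! ### Long covers -/

/-- A long cover `(L⁰, L¹, L², L³)` of a set `C`. -/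
def IsLongCover {V : Type*} (G : SimpleGraph V) (L : Fin 4 → Set V) (C : Set V) : Prop :=
  (∀ i j : Fin 4, i ≠ j → Disjoint (L i) (L j)) ∧
  (∀ i : Fin 4, Disjoint (L i) C) ∧
  (G.induce (L 0)).Connected ∧
  Covers G (L 0) (L 1) ∧ Covers G (L 1) (L 2) ∧ Covers G (L 2) (L 3) ∧
  Covers G (L 3) C ∧
  AntiComplete G C (L 0) ∧ AntiComplete G C (L 1) ∧ AntiComplete G C (L 2) ∧
  AntiComplete G (L 0) (L 2) ∧ AntiComplete G (L 0) (L 3) ∧ AntiComplete G (L 1) (L 3)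

/-- A long `q`-cover of a set `C`. -/
def IsLongQCover {V : Type*} (G : SimpleGraph V) {q : ℕ}
    (ℒ : Fin q → Fin 4 → Set V) (C : Set V) : Prop :=
  (∀ i, IsLongCover G (ℒ i) C) ∧
  (∀ i j, i ≠ j →
    Disjoint (ℒ i 0 ∪ ℒ i 1 ∪ ℒ i 2 ∪ ℒ i 3) (ℒ j 0 ∪ ℒ j 1 ∪ ℒ j 2 ∪ ℒ j 3)) ∧
  (∀ i j, i < j →
    AntiComplete G (ℒ j 0 ∪ ℒ j 1 ∪ ℒ j 2) (ℒ i 0 ∪ ℒ i 1 ∪ ℒ i 2 ∪ ℒ i 3))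

/-! ### Multicovers -/

/-- A multicover `(N_x : x ∈ X)` of a set `C`, where `X` is presented as an
injective tuple `x : Fin m → V` (whose ordering is the total order on `X`). -/
def IsMulticover {V : Type*} (G : SimpleGraph V) {m : ℕ}
    (x : Fin m → V) (N : Fin m → Set V) (C : Set V) : Prop :=
  Function.Injective x ∧
  (∀ i, N i ⊆ G.neighborSet (x i)) ∧
  (∀ i, x i ∉ C) ∧
  (∀ i j, x i ∉ N j) ∧
  (∀ i, Disjoint (N i) C) ∧
  (∀ i j, i ≠ j → Disjoint (N i) (N j)) ∧
  (∀ i j, ¬ G.Adj (x i) (x j)) ∧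
  (∀ i, ∀ u ∈ C, ¬ G.Adj (x i) u) ∧
  (∀ i, ∀ u ∈ C, ∃ w ∈ N i, G.Adj w u) ∧
  (∀ i j, i < j → ∀ u ∈ N i, ¬ G.Adj (x j) u)

/-- A pure multicover: no `x ∈ X` has a neighbour in `N_y` for `y ≠ x`. -/
def IsPureMC {V : Type*} (G : SimpleGraph V) {m : ℕ}
    (x : Fin m → V) (N : Fin m → Set V) : Prop :=
  ∀ i j, i ≠ j → ∀ u ∈ N i, ¬ G.Adj (x j) u

/-- An impure multicover: for `x ≺ y`, `x` is complete to `N_y`. -/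
def IsImpureMC {V : Type*} (G : SimpleGraph V) {m : ℕ}
    (x : Fin m → V) (N : Fin m → Set V) : Prop :=
  ∀ i j, i < j → ∀ u ∈ N j, G.Adj (x i) u


/-! ### Auxiliary lemmas for Lemma 4.1 -/

lemma localComp_adj' {V : Type*} (G : SimpleGraph V) (v a b : V) :
    (localComp G v).Adj a b ↔
      (G.Adj a b ∧ ¬(G.Adj v a ∧ G.Adj v b)) ∨
      (a ≠ b ∧ ¬ G.Adj a b ∧ G.Adj v a ∧ G.Adj v b) := Iff.rfl

lemma contractSet_adj' {V : Type*} (G : SimpleGraph V) (S : Set V) (a₀ : V)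
    (u v : {w : V // w ∉ S ∨ w = a₀}) :
    (contractSet G S a₀).Adj u v ↔ u ≠ v ∧
      ((u.1 ∉ S ∧ v.1 ∉ S ∧ G.Adj u.1 v.1) ∨
       (u.1 = a₀ ∧ v.1 ∉ S ∧ ∃ s ∈ S, G.Adj s v.1) ∨
       (v.1 = a₀ ∧ u.1 ∉ S ∧ ∃ s ∈ S, G.Adj u.1 s)) := Iff.rfl

/-- The equivalence between `V \ {c}` and `(V \ {c,d}) ∪ {c}` sending `d` to `c`. -/
def mergeEquiv {V : Type*} [DecidableEq V] (c d : V) (hdc : d ≠ c) :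
    {v : V // v ≠ c} ≃ {w : V // w ∉ ({c, d} : Set V) ∨ w = c} where
  toFun v := if h : v.1 = d then ⟨c, Or.inr rfl⟩
    else ⟨v.1, Or.inl (by simp [v.2, h])⟩
  invFun w := if h : w.1 = c then ⟨d, hdc⟩ else ⟨w.1, h⟩
  left_inv v := by
    rcases v with ⟨x, hx⟩
    by_cases h : x = d
    · subst h; simp [hdc]
    · simp [h, hx]
  right_inv w := by
    rcases w with ⟨x, hx⟩
    by_cases h : x = c
    · subst h; simp [hdc]
    · have hxd : x ≠ d := by
        rcases hx with hx | hx
        · intro hh; exact hx (by simp [hh])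
        · exact absurd hx h
      simp [h, hxd]

lemma mergeEquiv_apply_of_eq {V : Type*} [DecidableEq V] (c d : V) (hdc : d ≠ c)
    (v : {v : V // v ≠ c}) (h : v.1 = d) :
    mergeEquiv c d hdc v = ⟨c, Or.inr rfl⟩ := by
  simp [mergeEquiv, h]

lemma mergeEquiv_apply_of_ne {V : Type*} [DecidableEq V] (c d : V) (hdc : d ≠ c)
    (v : {v : V // v ≠ c}) (h : v.1 ≠ d) :
    mergeEquiv c d hdc v = ⟨v.1, Or.inl (by simp [v.2, h])⟩ := by
  simp [mergeEquiv, h]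

/-- **Lemma 4.1.** If `c` is a degree-`k` vertex of a big `k`-clique `C` whose unique
neighbour `d` outside `C` is adjacent to no other vertex of `C`, then
`(G − E(C − c))/cd` is a vertex-minor of `G`. -/
theorem eliminate_big_clique (V : Type) [Fintype V] (G : SimpleGraph V)
    (C : Finset V) (c d : V)
    (hC : IsBigClique G C) (hc : c ∈ C)
    (hdeg : (G.neighborSet c).ncard = C.card)
    (hd : d ∉ C) (hcd : G.Adj c d)
    (hdC : ∀ w ∈ C, w ≠ c → ¬ G.Adj d w) :
    HasVertexMinor G
      (contractSet
        (G.deleteEdges {e | ∃ u ∈ C, ∃ v ∈ C, u ≠ c ∧ v ≠ c ∧ e = s(u, v)})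
        {c, d} c) := by
  classical
  have hdc : d ≠ c := hcd.ne'
  set Eset : Set (Sym2 V) := {e | ∃ u ∈ C, ∃ v ∈ C, u ≠ c ∧ v ≠ c ∧ e = s(u, v)}
    with hEsetdef
  set G' : SimpleGraph V := G.deleteEdges Eset with hG'def
  set tgt : SimpleGraph {w : V // w ∉ ({c, d} : Set V) ∨ w = c} :=
    contractSet G' {c, d} c with htgtdef
  -- membership in the deleted edge set
  have hEdel : ∀ a b : V, s(a, b) ∈ Eset ↔ (a ∈ C ∧ b ∈ C ∧ a ≠ c ∧ b ≠ c) := by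
    intro a b
    constructor
    · rintro ⟨u, hu, v, hv, h1, h2, he⟩
      rcases Sym2.eq_iff.mp he with ⟨rfl, rfl⟩ | ⟨rfl, rfl⟩
      · exact ⟨hu, hv, h1, h2⟩
      · exact ⟨hv, hu, h2, h1⟩
    · rintro ⟨h1, h2, h3, h4⟩
      exact ⟨a, h1, b, h2, h3, h4, rfl⟩
  have hclq : ∀ x ∈ C, ∀ y ∈ C, x ≠ y → G.Adj x y := fun x hx y hy hxy =>
    hC.1 (by simpa using hx) (by simpa using hy) hxy
  -- the neighbourhood of c
  have hNsub : ((↑C : Set V) \ {c}) ∪ {d} ⊆ G.neighborSet c := by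
    rintro x (⟨hxC, hxc⟩ | hx)
    · exact hclq c hc x (by simpa using hxC) (fun h => hxc (by simp [h.symm]))
    · simp only [Set.mem_singleton_iff] at hx
      subst hx; exact hcd
  have hcard : (((↑C : Set V) \ {c}) ∪ {d}).ncard = C.card := by
    rw [Set.union_singleton,
      Set.ncard_insert_of_notMem (by simp [hd]) ((Set.toFinite _)),
      Set.ncard_diff_singleton_of_mem (Finset.mem_coe.mpr hc),
      Set.ncard_coe_finset]
    have h3 := hC.2.1
    omega
  have hNeq : G.neighborSet c = ((↑C : Set V) \ {c}) ∪ {d} :=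
    (Set.eq_of_subset_of_ncard_le hNsub
      (by rw [hdeg, hcard]) (Set.toFinite _)).symm
  have hAdjc : ∀ x, x ≠ c → x ≠ d → (G.Adj c x ↔ x ∈ C) := by
    intro x hxc hxd
    rw [← SimpleGraph.mem_neighborSet, hNeq]
    simp [hxc, hxd]
  -- adjacency facts in G'
  have hG'cb : ∀ b, b ≠ c → b ≠ d → (G'.Adj c b ↔ b ∈ C) := by
    intro b hbc hbd
    rw [hG'def, SimpleGraph.deleteEdges_adj]
    constructor
    · exact fun h => (hAdjc b hbc hbd).mp h.1
    · intro h
      refine ⟨(hAdjc b hbc hbd).mpr h, fun hm => ?_⟩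
      rcases (hEdel c b).mp hm with ⟨_, _, hcc, _⟩
      exact hcc rfl
  have hG'db : ∀ b, (G'.Adj d b ↔ G.Adj d b) := by
    intro b
    rw [hG'def, SimpleGraph.deleteEdges_adj]
    constructor
    · exact fun h => h.1
    · intro h
      refine ⟨h, fun hm => ?_⟩
      rcases (hEdel d b).mp hm with ⟨hdc', _, _, _⟩
      exact hd hdc'
  -- the two core adjacency computations
  have core1 : ∀ (a b : V), a ≠ c → a ≠ d → b ≠ c → b ≠ d →
      ∀ (p : a ∉ ({c, d} : Set V) ∨ a = c) (q : b ∉ ({c, d} : Set V) ∨ b = c),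
      (tgt.Adj ⟨a, p⟩ ⟨b, q⟩ ↔ (localComp G c).Adj a b) := by
    intro a b hac had hbc hbd p q
    rw [htgtdef, contractSet_adj', localComp_adj']
    have haS : a ∉ ({c, d} : Set V) := by simp [hac, had]
    have hbS : b ∉ ({c, d} : Set V) := by simp [hbc, hbd]
    constructor
    · rintro ⟨hne, ⟨-, -, hadj⟩ | ⟨h1, -⟩ | ⟨h1, -⟩⟩
      · rw [hG'def, SimpleGraph.deleteEdges_adj] at hadj
        refine Or.inl ⟨hadj.1, ?_⟩
        rintro ⟨h1, h2⟩
        rw [hAdjc a hac had] at h1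
        rw [hAdjc b hbc hbd] at h2
        exact hadj.2 ((hEdel a b).mpr ⟨h1, h2, hac, hbc⟩)
      · exact absurd h1 hac
      · exact absurd h1 hbc
    · intro h
      have hab : a ≠ b := by
        rcases h with ⟨h1, -⟩ | ⟨h1, -⟩
        · exact h1.ne
        · exact h1
      refine ⟨fun hh => hab (congrArg Subtype.val hh), Or.inl ⟨haS, hbS, ?_⟩⟩
      rw [hG'def, SimpleGraph.deleteEdges_adj]
      rcases h with ⟨h1, h2⟩ | ⟨-, h2, h3, h4⟩
      · refine ⟨h1, fun hm => ?_⟩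
        rcases (hEdel a b).mp hm with ⟨hC1, hC2, -, -⟩
        exact h2 ⟨(hAdjc a hac had).mpr hC1, (hAdjc b hbc hbd).mpr hC2⟩
      · rw [hAdjc a hac had] at h3
        rw [hAdjc b hbc hbd] at h4
        exact absurd (hclq a h3 b h4 hab) h2
  have core2 : ∀ (b : V), b ≠ c → b ≠ d →
      ∀ (p : c ∉ ({c, d} : Set V) ∨ c = c) (q : b ∉ ({c, d} : Set V) ∨ b = c),
      (tgt.Adj ⟨c, p⟩ ⟨b, q⟩ ↔ (localComp G c).Adj d b) := by
    intro b hbc hbd p q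
    rw [htgtdef, contractSet_adj', localComp_adj']
    have hbS : b ∉ ({c, d} : Set V) := by simp [hbc, hbd]
    have hcS : c ∈ ({c, d} : Set V) := by simp
    have hdS : d ∈ ({c, d} : Set V) := by simp
    have hGcb : G.Adj c b ↔ b ∈ C := hAdjc b hbc hbd
    have hdbC : b ∈ C → ¬ G.Adj d b := fun h => hdC b h hbc
    have hne : (⟨c, p⟩ : {w : V // w ∉ ({c, d} : Set V) ∨ w = c}) ≠ ⟨b, q⟩ :=
      fun hh => hbc (congrArg Subtype.val hh).symm
    constructor
    · rintro ⟨-, ⟨hcS', -⟩ | ⟨-, -, s, hsS, hadj⟩ | ⟨h1, -⟩⟩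
      · exact absurd hcS hcS'
      · have hsS' : s = c ∨ s = d := by simpa using hsS
        rcases hsS' with h | h
        · rw [h] at hadj
          have hbC : b ∈ C := (hG'cb b hbc hbd).mp hadj
          exact Or.inr ⟨fun hh => hbd hh.symm, hdbC hbC, hcd, hGcb.mpr hbC⟩
        · rw [h] at hadj
          have hdb : G.Adj d b := (hG'db b).mp hadj
          refine Or.inl ⟨hdb, ?_⟩
          rintro ⟨-, h2⟩
          exact hdbC (hGcb.mp h2) hdb
      · exact absurd h1 hbc
    · rintro (⟨h1, -⟩ | ⟨-, -, -, h4⟩)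
      · exact ⟨hne, Or.inr (Or.inl ⟨rfl, hbS, d, hdS, (hG'db b).mpr h1⟩)⟩
      · exact ⟨hne, Or.inr (Or.inl ⟨rfl, hbS, c, hcS,
          (hG'cb b hbc hbd).mpr (hGcb.mp h4)⟩)⟩
  -- the merging equivalence
  let eqv2 : {v : V // v ≠ c} ≃ {w : V // w ∉ ({c, d} : Set V) ∨ w = c} :=
    mergeEquiv c d hdc
  have coreAll : ∀ v w : {v : V // v ≠ c},
      tgt.Adj (eqv2 v) (eqv2 w) ↔ (localComp G c).Adj v.1 w.1 := by
    intro v w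
    by_cases h1 : v.1 = d <;> by_cases h2 : w.1 = d
    · have hv : eqv2 v = ⟨c, Or.inr rfl⟩ := mergeEquiv_apply_of_eq c d hdc v h1
      have hw : eqv2 w = ⟨c, Or.inr rfl⟩ := mergeEquiv_apply_of_eq c d hdc w h2
      rw [hv, hw, h1, h2]
      exact iff_of_false tgt.irrefl (localComp G c).irrefl
    · have hv : eqv2 v = ⟨c, Or.inr rfl⟩ := mergeEquiv_apply_of_eq c d hdc v h1
      have hw : eqv2 w = ⟨w.1, Or.inl (by simp [w.2, h2])⟩ :=
        mergeEquiv_apply_of_ne c d hdc w h2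
      rw [hv, hw, h1]
      exact core2 w.1 w.2 h2 _ _
    · have hv : eqv2 v = ⟨v.1, Or.inl (by simp [v.2, h1])⟩ :=
        mergeEquiv_apply_of_ne c d hdc v h1
      have hw : eqv2 w = ⟨c, Or.inr rfl⟩ := mergeEquiv_apply_of_eq c d hdc w h2
      rw [hv, hw, h2, tgt.adj_comm, (localComp G c).adj_comm]
      exact core2 v.1 v.2 h1 _ _
    · have hv : eqv2 v = ⟨v.1, Or.inl (by simp [v.2, h1])⟩ :=
        mergeEquiv_apply_of_ne c d hdc v h1
      have hw : eqv2 w = ⟨w.1, Or.inl (by simp [w.2, h2])⟩ :=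
        mergeEquiv_apply_of_ne c d hdc w h2
      rw [hv, hw]
      exact core1 v.1 w.1 v.2 h1 w.2 h2 _ _
  -- assemble the vertex-minor sequence
  let eV : V ≃ Fin (Nat.card V) := Finite.equivFin V
  have hLC : ∀ x y : Fin (Nat.card V),
      (localComp (G.comap eV.symm) (eV c)).Adj x y ↔
        (localComp G c).Adj (eV.symm x) (eV.symm y) := by
    intro x y
    rw [localComp_adj', localComp_adj']
    simp only [SimpleGraph.comap_adj, Equiv.symm_apply_apply, ne_eq,
      EmbeddingLike.apply_eq_iff_eq]
  let eqv1 : {u : Fin (Nat.card V) // u ≠ eV c} ≃ {v : V // v ≠ c} :=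
    Equiv.subtypeEquiv eV.symm (fun u => (not_congr (eV.symm_apply_eq)).symm)
  let eW : {w : V // w ∉ ({c, d} : Set V) ∨ w = c} ≃
      Fin (Nat.card {w : V // w ∉ ({c, d} : Set V) ∨ w = c}) :=
    Finite.equivFin _
  let iso : ((localComp (G.comap eV.symm) (eV c)).induce {u | u ≠ eV c}) ≃g
      (tgt.comap eW.symm) := by
    refine ⟨(eqv1.trans (eqv2.trans eW)), ?_⟩
    intro a b
    simp only [Equiv.trans_apply, SimpleGraph.comap_adj, Equiv.symm_apply_apply]
    exact (coreAll (eqv1 a) (eqv1 b)).trans (hLC a.1 b.1).symm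
  show Relation.ReflTransGen VMStep (toFinGraph G) (toFinGraph tgt)
  refine Relation.ReflTransGen.head
    (b := ⟨Nat.card V, localComp (G.comap eV.symm) (eV c)⟩)
    (Or.inr (Or.inl ⟨eV c, ⟨SimpleGraph.Iso.refl⟩⟩))
    (Relation.ReflTransGen.single
      (Or.inr (Or.inr ⟨eV c, ⟨iso⟩⟩)))
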